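/- The classes of bipartite graphs, co-bipartite graphs, and split graphs are exactly the minimal hereditary classes of graphs of unbounded VC-dimension: each of these three classes has unbounded VC-dimension, and every hereditary class with unbounded VC-dimension contains at least one of them as a subclass. -/

import Mathlib

/-- A set of vertices is independent if no two of its vertices are adjacent. -/
def SimpleGraph.IsIndepSet' {V : Type} (G : SimpleGraph V) (s : Set V) : Prop :=
  s.Pairwise fun a b => ¬ G.Adj a b

/-- The VC-dimension of the set system of closed neighbourhoods of `G` is at least `k`:
some set `A` of `k` vertices is shattered by closed neighbourhoods. -/
def VCDimAtLeast {V : Type} (G : SimpleGraph V) (k : ℕ) : Prop :=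
  ∃ A : Finset V, A.card = k ∧
    ∀ B : Finset V, B ⊆ A → ∃ v : V, ∀ a ∈ A, (a ∈ B ↔ (a = v ∨ G.Adj v a))

/-- `G` is bipartite: its vertices partition into at most two independent sets. -/
def IsBip {V : Type} (G : SimpleGraph V) : Prop :=
  ∃ f : V → Bool, ∀ u v, G.Adj u v → f u ≠ f v

/-- `G` is split: its vertices partition into a clique and an independent set. -/
def IsSplit {V : Type} (G : SimpleGraph V) : Prop :=
  ∃ K : Set V, G.IsClique K ∧ G.IsIndepSet' Kᶜ


open Classical

/-- The universal graph: `Fin n` side with internal edges iff `b1`, `Finset (Fin n)` side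
with internal edges iff `b2`, cross edges by membership. -/
def myG (n : ℕ) (b1 b2 : Bool) : SimpleGraph (Fin n ⊕ Finset (Fin n)) where
  Adj x y := x ≠ y ∧ (match x, y with
    | .inl _, .inl _ => b1 = true
    | .inr _, .inr _ => b2 = true
    | .inl i, .inr t => i ∈ t
    | .inr t, .inl i => i ∈ t)
  symm := ⟨by
    rintro (i|s) (j|t) ⟨hne, h⟩ <;> exact ⟨Ne.symm hne, h⟩⟩
  loopless := ⟨by rintro (i|s) ⟨hne, _⟩ <;> exact hne rfl⟩

lemma myG_adj_ll (n : ℕ) (b1 b2 : Bool) (i j : Fin n) :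
    (myG n b1 b2).Adj (.inl i) (.inl j) ↔ (i ≠ j ∧ b1 = true) := by
  constructor
  · rintro ⟨hne, h⟩; exact ⟨fun hij => hne (by rw [hij]), h⟩
  · rintro ⟨hne, h⟩; exact ⟨by simpa using hne, h⟩

lemma myG_adj_rr (n : ℕ) (b1 b2 : Bool) (s t : Finset (Fin n)) :
    (myG n b1 b2).Adj (.inr s) (.inr t) ↔ (s ≠ t ∧ b2 = true) := by
  constructor
  · rintro ⟨hne, h⟩; exact ⟨fun hij => hne (by rw [hij]), h⟩
  · rintro ⟨hne, h⟩; exact ⟨by simpa using hne, h⟩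

lemma myG_adj_lr (n : ℕ) (b1 b2 : Bool) (i : Fin n) (t : Finset (Fin n)) :
    (myG n b1 b2).Adj (.inl i) (.inr t) ↔ i ∈ t := by
  constructor
  · rintro ⟨_, h⟩; exact h
  · intro h; exact ⟨by simp, h⟩

lemma myG_adj_rl (n : ℕ) (b1 b2 : Bool) (i : Fin n) (t : Finset (Fin n)) :
    (myG n b1 b2).Adj (.inr t) (.inl i) ↔ i ∈ t := by
  constructor
  · rintro ⟨_, h⟩; exact h
  · intro h; exact ⟨by simp, h⟩

/-- The VC dimension shattering for myG. -/
lemma myG_vc (n : ℕ) (b1 b2 : Bool) : VCDimAtLeast (myG n b1 b2) n := by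
  classical
  refine ⟨(Finset.univ : Finset (Fin n)).image Sum.inl, ?_, ?_⟩
  · rw [Finset.card_image_of_injective _ Sum.inl_injective, Finset.card_univ, Fintype.card_fin]
  · intro B hB
    refine ⟨Sum.inr (Finset.univ.filter (fun i => Sum.inl i ∈ B)), ?_⟩
    intro a ha
    simp only [Finset.mem_image] at ha
    obtain ⟨i, _, rfl⟩ := ha
    constructor
    · intro hmem
      right
      rw [myG_adj_rl]
      simp [hmem]
    · rintro (h | h)
      · exact absurd h (by simp)
      · rw [myG_adj_rl] at h
        simpa using h
lemma myG_bip (n : ℕ) : IsBip (myG n false false) := by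
  refine ⟨Sum.isRight, ?_⟩
  rintro (i|s) (j|t) h
  · rw [myG_adj_ll] at h; simp at h
  · simp
  · simp
  · rw [myG_adj_rr] at h; simp at h

lemma myG_cobip (n : ℕ) : IsBip (myG n true true)ᶜ := by
  refine ⟨Sum.isRight, ?_⟩
  rintro (i|s) (j|t) h <;> rw [SimpleGraph.compl_adj] at h
  · exact absurd ((myG_adj_ll n true true i j).2 ⟨by simpa using h.1, rfl⟩) h.2
  · simp
  · simp
  · exact absurd ((myG_adj_rr n true true s t).2 ⟨by simpa using h.1, rfl⟩) h.2

lemma myG_split (n : ℕ) : IsSplit (myG n false true) := by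
  refine ⟨Set.range Sum.inr, ?_, ?_⟩
  · rintro x ⟨s, rfl⟩ y ⟨t, rfl⟩ hne
    exact (myG_adj_rr n false true s t).2 ⟨by rintro rfl; exact hne rfl, rfl⟩
  · rintro x hx y hy hne hadj
    rcases x with i | s
    · rcases y with j | t
      · rw [myG_adj_ll] at hadj; simp at hadj
      · exact hy ⟨t, rfl⟩
    · exact hx ⟨s, rfl⟩

lemma myG_split' (n : ℕ) : IsSplit (myG n true false) := by
  refine ⟨Set.range Sum.inl, ?_, ?_⟩
  · rintro x ⟨i, rfl⟩ y ⟨j, rfl⟩ hne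
    exact (myG_adj_ll n true false i j).2 ⟨by rintro rfl; exact hne rfl, rfl⟩
  · rintro x hx y hy hne hadj
    rcases x with i | s
    · exact hx ⟨i, rfl⟩
    · rcases y with j | t
      · exact hy ⟨j, rfl⟩
      · rw [myG_adj_rr] at hadj; simp at hadj
/-- Finite Ramsey theorem, asymmetric form. -/
theorem myRamsey (a : ℕ) : ∀ b : ℕ, ∃ N : ℕ, ∀ (V : Type) (G : SimpleGraph V) (s : Finset V),
    N ≤ s.card →
    (∃ t ⊆ s, a ≤ t.card ∧ ∀ x ∈ t, ∀ y ∈ t, x ≠ y → G.Adj x y) ∨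
    (∃ t ⊆ s, b ≤ t.card ∧ ∀ x ∈ t, ∀ y ∈ t, x ≠ y → ¬ G.Adj x y) := by
  classical
  induction a with
  | zero =>
    intro b
    exact ⟨0, fun V G s _ => Or.inl ⟨∅, Finset.empty_subset s, by simp, by simp⟩⟩
  | succ a ihA =>
    intro b
    induction b with
    | zero =>
      exact ⟨0, fun V G s _ => Or.inr ⟨∅, Finset.empty_subset s, by simp, by simp⟩⟩
    | succ b ihB =>
      obtain ⟨N1, h1⟩ := ihA (b + 1)
      obtain ⟨N2, h2⟩ := ihB
      refine ⟨N1 + N2 + 1, fun V G s hs => ?_⟩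
      have hne : s.Nonempty := Finset.card_pos.mp (by omega)
      obtain ⟨x, hx⟩ := hne
      set s' := s.erase x with hs'
      have hcard : N1 + N2 ≤ s'.card := by
        rw [hs', Finset.card_erase_of_mem hx]
        omega
      set t1 := s'.filter (fun y => G.Adj x y) with ht1
      set t2 := s'.filter (fun y => ¬ G.Adj x y) with ht2
      have hsum : t1.card + t2.card = s'.card :=
        Finset.card_filter_add_card_filter_not (fun y => G.Adj x y)
      have hcases : N1 ≤ t1.card ∨ N2 ≤ t2.card := by omega
      have ht1s : t1 ⊆ s := (Finset.filter_subset _ _).trans (Finset.erase_subset _ _)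
      have ht2s : t2 ⊆ s := (Finset.filter_subset _ _).trans (Finset.erase_subset _ _)
      rcases hcases with hc | hc
      · rcases h1 V G t1 hc with ⟨t, hts, htc, hcl⟩ | ⟨t, hts, htc, hind⟩
        · refine Or.inl ⟨insert x t, ?_, ?_, ?_⟩
          · exact Finset.insert_subset hx (hts.trans ht1s)
          · have hxt : x ∉ t := by
              intro hxt
              have := hts hxt
              rw [ht1] at this
              exact (Finset.ne_of_mem_erase (Finset.mem_of_mem_filter x this)) rfl
            rw [Finset.card_insert_of_notMem hxt]
            omega
          · intro u hu v hv huv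
            rcases Finset.mem_insert.mp hu with rfl | hu' <;>
              rcases Finset.mem_insert.mp hv with rfl | hv'
            · exact absurd rfl huv
            · exact (Finset.mem_filter.mp (hts hv')).2
            · exact ((Finset.mem_filter.mp (hts hu')).2).symm
            · exact hcl u hu' v hv' huv
        · exact Or.inr ⟨t, hts.trans ht1s, htc, hind⟩
      · rcases h2 V G t2 hc with ⟨t, hts, htc, hcl⟩ | ⟨t, hts, htc, hind⟩
        · exact Or.inl ⟨t, hts.trans ht2s, htc, hcl⟩
        · refine Or.inr ⟨insert x t, ?_, ?_, ?_⟩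
          · exact Finset.insert_subset hx (hts.trans ht2s)
          · have hxt : x ∉ t := by
              intro hxt
              have := hts hxt
              rw [ht2] at this
              exact (Finset.ne_of_mem_erase (Finset.mem_of_mem_filter x this)) rfl
            rw [Finset.card_insert_of_notMem hxt]
            omega
          · intro u hu v hv huv
            rcases Finset.mem_insert.mp hu with rfl | hu' <;>
              rcases Finset.mem_insert.mp hv with rfl | hv'
            · exact absurd rfl huv
            · exact (Finset.mem_filter.mp (hts hv')).2
            · intro hadj; exact (Finset.mem_filter.mp (hts hu')).2 hadj.symm
            · exact hind u hu' v hv' huv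
        
/-- Ramsey, symmetric exact-size boolean form. -/
theorem myRamsey2 (q : ℕ) : ∃ N : ℕ, ∀ (V : Type) (G : SimpleGraph V) (s : Finset V),
    N ≤ s.card → ∃ t ⊆ s, t.card = q ∧ ∃ b : Bool,
      ∀ x ∈ t, ∀ y ∈ t, x ≠ y → (G.Adj x y ↔ b = true) := by
  obtain ⟨N, hN⟩ := myRamsey q q
  refine ⟨N, fun V G s hs => ?_⟩
  rcases hN V G s hs with ⟨t, hts, htc, h⟩ | ⟨t, hts, htc, h⟩
  · obtain ⟨t', ht't, ht'c⟩ := Finset.exists_subset_card_eq htc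
    exact ⟨t', ht't.trans hts, ht'c, true,
      fun x hx y hy hxy => by simp [h x (ht't hx) y (ht't hy) hxy]⟩
  · obtain ⟨t', ht't, ht'c⟩ := Finset.exists_subset_card_eq htc
    exact ⟨t', ht't.trans hts, ht'c, false,
      fun x hx y hy hxy => by simp [h x (ht't hx) y (ht't hy) hxy]⟩
/-- Monotonicity of the universal graphs. -/
noncomputable def embMono {m m' : ℕ} (h : m ≤ m') (b1 b2 : Bool) :
    myG m b1 b2 ↪g myG m' b1 b2 := by
  classical
  refine ⟨⟨Sum.map (Fin.castLE h) (fun s => s.map ⟨Fin.castLE h, Fin.castLE_injective h⟩), ?_⟩, ?_⟩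
  · apply Sum.map_injective.mpr
    constructor
    · exact Fin.castLE_injective h
    · intro s t hst
      exact Finset.map_injective _ hst
  · rintro (i|s) (j|t) <;>
      simp only [Function.Embedding.coeFn_mk, Sum.map_inl, Sum.map_inr]
    · rw [myG_adj_ll, myG_adj_ll]
      simp [(Fin.castLE_injective h).ne_iff]
    · rw [myG_adj_lr, myG_adj_lr]; exact Finset.mem_map' _
    · rw [myG_adj_rl, myG_adj_rl]; exact Finset.mem_map' _
    · rw [myG_adj_rr, myG_adj_rr, (Finset.map_injective _).ne_iff]

/-- Any graph partitioned into a `b1`-homogeneous part and a `b2`-homogeneous part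
embeds in the universal graph `myG (card V) b1 b2`. -/
lemma embPartition {Vh : Type} [Fintype Vh] (H : SimpleGraph Vh) (f : Vh → Bool)
    (b1 b2 : Bool)
    (h0 : ∀ u v, f u = false → f v = false → u ≠ v → (H.Adj u v ↔ b1 = true))
    (h1 : ∀ u v, f u = true → f v = true → u ≠ v → (H.Adj u v ↔ b2 = true)) :
    Nonempty (H ↪g myG (Fintype.card Vh) b1 b2) := by
  classical
  set e := Fintype.equivFin Vh with he
  set tagset : Vh → Finset (Fin (Fintype.card Vh)) :=
    fun v => insert (e v) ((Finset.univ.filter (fun u => f u = false ∧ H.Adj v u)).image e)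
    with htag
  have memtag : ∀ u v, e u ∈ tagset v ↔ (u = v ∨ (f u = false ∧ H.Adj v u)) := by
    intro u v
    rw [htag]
    simp only [Finset.mem_insert, Finset.mem_image, Finset.mem_filter, Finset.mem_univ,
      true_and]
    constructor
    · rintro (h | ⟨w, hw, hwe⟩)
      · exact Or.inl (e.injective h)
      · exact Or.inr (e.injective hwe ▸ hw)
    · rintro (rfl | h)
      · exact Or.inl rfl
      · exact Or.inr ⟨u, h, rfl⟩
  set φ : Vh → (Fin (Fintype.card Vh) ⊕ Finset (Fin (Fintype.card Vh))) :=
    fun v => if f v = true then Sum.inr (tagset v) else Sum.inl (e v) with hφ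
  have hφt : ∀ v, f v = true → φ v = Sum.inr (tagset v) := by
    intro v hv; simp only [hφ, hv, if_pos]
  have hφf : ∀ v, f v = false → φ v = Sum.inl (e v) := by
    intro v hv; simp only [hφ, hv]; simp
  have htagne : ∀ u v, f u = true → f v = true → u ≠ v → tagset u ≠ tagset v := by
    intro u v hu hv hne heq
    have : e u ∈ tagset v := heq ▸ (memtag u u).mpr (Or.inl rfl)
    rcases (memtag u v).mp this with h | h
    · exact hne h
    · rw [hu] at h; exact absurd h.1 (by simp)
  have hinj : Function.Injective φ := by
    intro u v huv
    by_cases hu : f u = true <;> by_cases hv : f v = true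
    · rw [hφt u hu, hφt v hv] at huv
      by_contra hne
      exact htagne u v hu hv hne (Sum.inr_injective huv)
    · rw [hφt u hu, hφf v (by simpa using hv)] at huv
      exact absurd huv (by simp)
    · rw [hφf u (by simpa using hu), hφt v hv] at huv
      exact absurd huv (by simp)
    · rw [hφf u (by simpa using hu), hφf v (by simpa using hv)] at huv
      exact e.injective (Sum.inl_injective huv)
  refine ⟨⟨⟨φ, hinj⟩, ?_⟩⟩
  intro u v
  show (myG _ b1 b2).Adj (φ u) (φ v) ↔ H.Adj u v
  by_cases hu : f u = true <;> by_cases hv : f v = true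
  · rw [hφt u hu, hφt v hv, myG_adj_rr]
    constructor
    · rintro ⟨hne, hb⟩
      have hne' : u ≠ v := by rintro rfl; exact hne rfl
      exact (h1 u v hu hv hne').mpr hb
    · intro hadj
      have hne' : u ≠ v := H.ne_of_adj hadj
      exact ⟨htagne u v hu hv hne', (h1 u v hu hv hne').mp hadj⟩
  · have hv' : f v = false := by simpa using hv
    rw [hφt u hu, hφf v hv', myG_adj_rl, memtag]
    constructor
    · rintro (rfl | h)
      · rw [hu] at hv'; exact absurd hv' (by simp)
      · exact h.2
    · intro h; exact Or.inr ⟨hv', h⟩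
  · have hu' : f u = false := by simpa using hu
    rw [hφf u hu', hφt v hv, myG_adj_lr, memtag, H.adj_comm]
    constructor
    · rintro (rfl | h)
      · rw [hu'] at hv; exact absurd hv (by simp)
      · exact h.2
    · intro h; exact Or.inr ⟨hu', h⟩
  · have hu' : f u = false := by simpa using hu
    have hv' : f v = false := by simpa using hv
    rw [hφf u hu', hφf v hv', myG_adj_ll]
    constructor
    · rintro ⟨hne, hb⟩
      have hne' : u ≠ v := by rintro rfl; exact hne rfl
      exact (h0 u v hu' hv' hne').mpr hb
    · intro hadj
      have hne' : u ≠ v := H.ne_of_adj hadj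
      exact ⟨e.injective.ne_iff.mpr hne', (h0 u v hu' hv' hne').mp hadj⟩
/-- Core lemma: a graph with huge VC dimension contains an induced universal graph
`myG (n+1) b1 b2` for some homogeneity booleans `b1 b2`. -/
lemma core (n : ℕ) : ∃ K : ℕ, ∀ (V : Type) (G : SimpleGraph V),
    VCDimAtLeast G K → ∃ b1 b2 : Bool, Nonempty (myG (n+1) b1 b2 ↪g G) := by
  classical
  set d := n + 1 with hd
  set q := 2 ^ d with hq
  obtain ⟨L, hL⟩ := myRamsey2 q
  set N := 2 ^ L * d with hN
  obtain ⟨K, hK⟩ := myRamsey2 (2 * N + 2)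
  refine ⟨K, fun V G hVC => ?_⟩
  obtain ⟨A₀, hA₀card, hshat⟩ := hVC
  -- Step 1: monochromatic shattered set A1
  obtain ⟨A1, hA1sub, hA1card, b1, hA1mono⟩ := hK V G A₀ (le_of_eq hA₀card.symm)
  have hA1ne : A1.Nonempty := Finset.card_pos.mp (by omega)
  obtain ⟨x₀, hx₀⟩ := hA1ne
  -- witness function
  have hshat1 : ∀ B : Finset V, ∃ v : V, B ⊆ A1 →
      ∀ a ∈ A1, (a ∈ B ↔ (a = v ∨ G.Adj v a)) := by
    intro B
    by_cases h : B ⊆ A1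
    · obtain ⟨v, hv⟩ := hshat B (h.trans hA1sub)
      exact ⟨v, fun _ a ha => hv a (hA1sub ha)⟩
    · exact ⟨x₀, fun h' => absurd h' h⟩
  choose wfun wspec using hshat1
  have wsub : ∀ B B' : Finset V, B ⊆ A1 → B' ⊆ A1 → wfun B = wfun B' → B ⊆ B' := by
    intro B B' hB hB' heq a ha
    have haA1 : a ∈ A1 := hB ha
    have h1 := (wspec B hB a haA1).mp ha
    rw [heq] at h1
    exact (wspec B' hB' a haA1).mpr h1
  have winj : ∀ B B' : Finset V, B ⊆ A1 → B' ⊆ A1 → wfun B = wfun B' → B = B' :=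
    fun B B' hB hB' heq =>
      Finset.Subset.antisymm (wsub B B' hB hB' heq) (wsub B' B hB' hB heq.symm)
  -- Step 2: split A1
  obtain ⟨A', hA'sub, hA'card⟩ := Finset.exists_subset_card_eq (show N ≤ A1.card by omega)
  set A2 := A1 \ A' with hA2
  have hA2card : A2.card = N + 2 := by
    rw [hA2, Finset.card_sdiff_of_subset hA'sub]
    omega
  have hA'A2 : ∀ a ∈ A', a ∉ A2 := by
    intro a ha hmem
    rw [hA2, Finset.mem_sdiff] at hmem
    exact hmem.2 ha
  have hA2sub : A2 ⊆ A1 := Finset.sdiff_subset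
  -- Step 3: good paddings exist
  have hXex : ∀ S : Finset V, S ⊆ A' → ∃ X : Finset V, X ⊆ A2 ∧ wfun (S ∪ X) ∉ A1 := by
    intro S hS
    by_contra hcon
    push_neg at hcon
    have hinjOn : Set.InjOn (fun X => wfun (S ∪ X)) ↑A2.powerset := by
      intro X hX X' hX' heq
      have hXA2 : X ⊆ A2 := by simpa using hX
      have hX'A2 : X' ⊆ A2 := by simpa using hX'
      have hU : S ∪ X = S ∪ X' := winj _ _
        (Finset.union_subset (hS.trans hA'sub) (hXA2.trans hA2sub))
        (Finset.union_subset (hS.trans hA'sub) (hX'A2.trans hA2sub)) heq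
      ext a
      constructor
      · intro ha
        have : a ∈ S ∪ X' := hU ▸ Finset.mem_union_right S ha
        rcases Finset.mem_union.mp this with h | h
        · exact absurd (hA'A2 a (hS h)) (fun hc => hc (hXA2 ha))
        · exact h
      · intro ha
        have : a ∈ S ∪ X := hU.symm ▸ Finset.mem_union_right S ha
        rcases Finset.mem_union.mp this with h | h
        · exact absurd (hA'A2 a (hS h)) (fun hc => hc (hX'A2 ha))
        · exact h
    have hmaps : ∀ X ∈ A2.powerset, wfun (S ∪ X) ∈ A1 := by
      intro X hX
      exact hcon X (Finset.mem_powerset.mp hX)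
    have hcard := Finset.card_le_card_of_injOn _ hmaps hinjOn
    rw [Finset.card_powerset, hA2card, hA1card] at hcard
    have h2 : 2 * N + 2 < 2 ^ (N + 2) := by
      have h3 : N + 1 < 2 ^ (N + 1) := Nat.lt_two_pow_self
      calc 2 * N + 2 = 2 * (N + 1) := by ring
        _ < 2 * 2 ^ (N + 1) := by omega
        _ = 2 ^ (N + 2) := by ring
    omega
  choose Xfun hXsub hXgood using hXex
  -- Step 4: coordinates and patterns
  have hcardC : Fintype.card (Finset (Fin L) × Fin d) = Fintype.card {x // x ∈ A'} := by
    rw [Fintype.card_prod, Fintype.card_finset, Fintype.card_fin, Fintype.card_fin,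
      Fintype.card_coe, hA'card]
  set e := Fintype.equivOfCardEq hcardC with he
  have hγc : Fintype.card (Fin (2 ^ d)) = Fintype.card (Finset (Fin d)) := by
    rw [Fintype.card_finset, Fintype.card_fin, Fintype.card_fin]
  set γ := Fintype.equivOfCardEq hγc with hγ
  have hqpos : 0 < 2 ^ d := Nat.pow_pos (by norm_num)
  set rank : Fin L → Finset (Fin L) → ℕ := fun v Q => (Q.filter (fun x => x < v)).card
    with hrank
  set memF : Fin L → (Finset (Fin L) × Fin d) → Prop :=
    fun v c => v ∈ c.1 ∧ c.2 ∈ γ ⟨rank v c.1 % 2 ^ d, Nat.mod_lt _ hqpos⟩ with hmemF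
  set Sv : Fin L → Finset V :=
    fun v => (Finset.univ.filter (fun c => memF v c)).image (fun c => ((e c : {x // x ∈ A'}) : V))
    with hSv
  have hSsub : ∀ v, Sv v ⊆ A' := by
    intro v a ha
    rw [hSv] at ha
    obtain ⟨c, _, rfl⟩ := Finset.mem_image.mp ha
    exact (e c).2
  have hmemSv : ∀ v c, (((e c : {x // x ∈ A'}) : V) ∈ Sv v) ↔ memF v c := by
    intro v c
    rw [hSv]
    constructor
    · intro h
      obtain ⟨c', hc', hcc⟩ := Finset.mem_image.mp h
      have : c' = c := e.injective (Subtype.coe_injective hcc)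
      rw [← this]
      exact (Finset.mem_filter.mp hc').2
    · intro h
      exact Finset.mem_image.mpr ⟨c, Finset.mem_filter.mpr ⟨Finset.mem_univ c, h⟩, rfl⟩
  -- rank lemmas
  have ranklt : ∀ (Q : Finset (Fin L)) (u u' : Fin L), u ∈ Q → u' ∈ Q → u < u' →
      rank u Q < rank u' Q := by
    intro Q u u' hu hu' huu
    apply Finset.card_lt_card
    constructor
    · intro x hx
      rw [Finset.mem_filter] at *
      exact ⟨hx.1, hx.2.trans huu⟩
    · intro hsub
      have : u ∈ Q.filter (fun x => x < u') := Finset.mem_filter.mpr ⟨hu, huu⟩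
      have := hsub this
      rw [Finset.mem_filter] at this
      exact absurd this.2 (lt_irrefl u)
  have rankne : ∀ (Q : Finset (Fin L)) (u u' : Fin L), u ∈ Q → u' ∈ Q → u ≠ u' →
      rank u Q ≠ rank u' Q := by
    intro Q u u' hu hu' hne
    rcases lt_or_gt_of_ne hne with h | h
    · exact Nat.ne_of_lt (ranklt Q u u' hu hu' h)
    · exact (Nat.ne_of_lt (ranklt Q u' u hu' hu h)).symm
  have rankbound : ∀ (Q : Finset (Fin L)) (u : Fin L), u ∈ Q → rank u Q < Q.card := by
    intro Q u hu
    have hsub : Q.filter (fun x => x < u) ⊆ Q.erase u := by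
      intro x hx
      rw [Finset.mem_filter] at hx
      exact Finset.mem_erase.mpr ⟨Fin.ne_of_lt hx.2, hx.1⟩
    calc rank u Q ≤ (Q.erase u).card := Finset.card_le_card hsub
      _ < Q.card := by
          rw [Finset.card_erase_of_mem hu]
          have : 0 < Q.card := Finset.card_pos.mpr ⟨u, hu⟩
          omega
  have h2d : 2 ≤ 2 ^ d := by
    calc 2 = 2 ^ 1 := by norm_num
      _ ≤ 2 ^ d := Nat.pow_le_pow_right (by norm_num) (by omega)
  -- injectivity of patterns
  have hSvinj : Function.Injective Sv := by
    intro v v' heq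
    by_contra hne
    set Q : Finset (Fin L) := {v, v'} with hQ
    have hvQ : v ∈ Q := by rw [hQ]; simp
    have hv'Q : v' ∈ Q := by rw [hQ]; simp
    have hr : rank v Q ≠ rank v' Q := rankne Q v v' hvQ hv'Q hne
    have hQc : Q.card ≤ 2 := Finset.card_insert_le _ _ |>.trans (by simp)
    have hrb : rank v Q < 2 ^ d := by
      have := rankbound Q v hvQ; omega
    have hrb' : rank v' Q < 2 ^ d := by
      have := rankbound Q v' hv'Q; omega
    set T := γ ⟨rank v Q % 2 ^ d, Nat.mod_lt _ hqpos⟩ with hT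
    set T' := γ ⟨rank v' Q % 2 ^ d, Nat.mod_lt _ hqpos⟩ with hT'
    have hTne : T ≠ T' := by
      rw [hT, hT']
      apply γ.injective.ne_iff.mpr
      apply Fin.ne_of_val_ne
      simpa [Nat.mod_eq_of_lt hrb, Nat.mod_eq_of_lt hrb'] using hr
    have hex : ¬ ∀ j, (j ∈ T ↔ j ∈ T') := fun h => hTne (Finset.ext h)
    obtain ⟨j, hj⟩ := not_forall.mp hex
    have h1 : (((e (Q, j) : {x // x ∈ A'}) : V) ∈ Sv v) ↔ memF v (Q, j) := hmemSv v (Q, j)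
    have h2 : (((e (Q, j) : {x // x ∈ A'}) : V) ∈ Sv v') ↔ memF v' (Q, j) := hmemSv v' (Q, j)
    rw [heq] at h1
    have hiff : memF v (Q, j) ↔ memF v' (Q, j) := h1.symm.trans h2
    rw [hmemF] at hiff
    simp only [] at hiff
    apply hj
    constructor
    · intro hjT
      exact (hiff.mp ⟨hvQ, hjT⟩).2
    · intro hjT'
      exact (hiff.mpr ⟨hv'Q, hjT'⟩).2
  -- witnesses
  set Wf : Fin L → V := fun v => wfun (Sv v ∪ Xfun (Sv v) (hSsub v)) with hWf
  have hUsubA1 : ∀ v, Sv v ∪ Xfun (Sv v) (hSsub v) ⊆ A1 :=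
    fun v => Finset.union_subset ((hSsub v).trans hA'sub)
      ((hXsub (Sv v) (hSsub v)).trans hA2sub)
  have hWnotA1 : ∀ v, Wf v ∉ A1 := fun v => hXgood (Sv v) (hSsub v)
  have htrace : ∀ v, ∀ a ∈ A', (a ∈ Sv v ↔ G.Adj (Wf v) a) := by
    intro v a ha
    have haA1 : a ∈ A1 := hA'sub ha
    have hspec := wspec _ (hUsubA1 v) a haA1
    constructor
    · intro hmem
      rcases hspec.mp (Finset.mem_union_left _ hmem) with h | h
      · have hWv : Wf v = wfun (Sv v ∪ Xfun (Sv v) (hSsub v)) := rfl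
        exact absurd (show Wf v ∈ A1 by rw [hWv, ← h]; exact haA1) (hWnotA1 v)
      · exact h
    · intro hadj
      rcases Finset.mem_union.mp (hspec.mpr (Or.inr hadj)) with h | h
      · exact h
      · exact absurd (hA'A2 a ha) (fun hc => hc (hXsub (Sv v) (hSsub v) h))
  have hWinj : Function.Injective Wf := by
    intro v v' heq
    apply hSvinj
    have hU := winj _ _ (hUsubA1 v) (hUsubA1 v') heq
    ext a
    constructor
    · intro ha
      have haA' : a ∈ A' := hSsub v ha
      have : a ∈ Sv v' ∪ Xfun (Sv v') (hSsub v') := hU ▸ Finset.mem_union_left _ ha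
      rcases Finset.mem_union.mp this with h | h
      · exact h
      · exact absurd (hA'A2 a haA') (fun hc => hc (hXsub (Sv v') (hSsub v') h))
    · intro ha
      have haA' : a ∈ A' := hSsub v' ha
      have : a ∈ Sv v ∪ Xfun (Sv v) (hSsub v) := hU.symm ▸ Finset.mem_union_left _ ha
      rcases Finset.mem_union.mp this with h | h
      · exact h
      · exact absurd (hA'A2 a haA') (fun hc => hc (hXsub (Sv v) (hSsub v) h))
  -- Ramsey on the witnesses
  set WS : Finset V := Finset.univ.image Wf with hWS
  have hWScard : L ≤ WS.card := by
    rw [hWS, Finset.card_image_of_injective _ hWinj, Finset.card_univ, Fintype.card_fin]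
  obtain ⟨UW, hUWsub, hUWcard, b2, hUWmono⟩ := hL V G WS hWScard
  set U : Finset (Fin L) := Finset.univ.filter (fun v => Wf v ∈ UW) with hU
  have hUimg : UW = U.image Wf := by
    apply Finset.Subset.antisymm
    · intro x hx
      obtain ⟨v, _, rfl⟩ := Finset.mem_image.mp (hUWsub hx)
      exact Finset.mem_image.mpr ⟨v, Finset.mem_filter.mpr ⟨Finset.mem_univ v, hx⟩, rfl⟩
    · intro x hx
      obtain ⟨v, hv, rfl⟩ := Finset.mem_image.mp hx
      exact (Finset.mem_filter.mp hv).2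
  have hUcard : U.card = q := by
    have := hUWcard
    rw [hUimg, Finset.card_image_of_injective _ hWinj] at this
    exact this
  have hWmemUW : ∀ v ∈ U, Wf v ∈ UW := by
    intro v hv
    rw [hU] at hv
    exact (Finset.mem_filter.mp hv).2
  -- rank is a bijection from U onto range q
  have hranklt : ∀ v ∈ U, rank v U < q := by
    intro v hv
    have := rankbound U v hv
    omega
  have hUne : U.Nonempty := Finset.card_pos.mp (by rw [hUcard, hq]; omega)
  obtain ⟨v₀, hv₀⟩ := hUne
  have hsurj : ∀ r : ℕ, ∃ v : Fin L, r < q → (v ∈ U ∧ rank v U = r) := by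
    intro r
    by_cases hr : r < q
    · have himg : U.image (fun v => rank v U) = Finset.range q := by
        apply Finset.eq_of_subset_of_card_le
        · intro x hx
          obtain ⟨v, hv, rfl⟩ := Finset.mem_image.mp hx
          exact Finset.mem_range.mpr (hranklt v hv)
        · rw [Finset.card_range, Finset.card_image_of_injOn
            (fun u hu u' hu' hne => by
              by_contra hc
              exact rankne U u u' hu hu' hc hne), hUcard]
      have : r ∈ U.image (fun v => rank v U) := himg ▸ Finset.mem_range.mpr hr
      obtain ⟨v, hv, hrv⟩ := Finset.mem_image.mp this
      exact ⟨v, fun _ => ⟨hv, hrv⟩⟩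
    · exact ⟨v₀, fun h => absurd h hr⟩
  choose uT huT using hsurj
  -- representative for each subset T of Fin d
  set rep : Finset (Fin d) → Fin L := fun T => uT ((γ.symm T : Fin (2 ^ d)) : ℕ) with hrep
  have hrepspec : ∀ T : Finset (Fin d), rep T ∈ U ∧ rank (rep T) U = ((γ.symm T : Fin (2 ^ d)) : ℕ) := by
    intro T
    exact huT _ (by rw [hq]; exact (γ.symm T).2)
  have hrepinj : Function.Injective rep := by
    intro T T' heq
    have h1 := (hrepspec T).2
    have h2 := (hrepspec T').2
    rw [heq, h2] at h1
    exact γ.symm.injective (Fin.val_injective h1.symm)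
  -- coordinates
  set aj : Fin d → V := fun j => ((e (U, j) : {x // x ∈ A'}) : V) with haj
  have hajA' : ∀ j, aj j ∈ A' := fun j => (e (U, j)).2
  have hajinj : Function.Injective aj := by
    intro j j' heq
    have := e.injective (Subtype.coe_injective heq)
    exact (Prod.mk.injEq _ _ _ _ ▸ this : _ ∧ _).2
  -- the key cross-adjacency computation
  have hkey : ∀ (T : Finset (Fin d)) (j : Fin d), (aj j ∈ Sv (rep T)) ↔ j ∈ T := by
    intro T j
    rw [haj]
    rw [hmemSv (rep T) (U, j), hmemF]
    simp only []
    constructor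
    · intro h
      have hmod : rank (rep T) U % 2 ^ d = ((γ.symm T : Fin (2 ^ d)) : ℕ) := by
        rw [(hrepspec T).2]
        exact Nat.mod_eq_of_lt (γ.symm T).2
      have : (⟨rank (rep T) U % 2 ^ d, Nat.mod_lt _ hqpos⟩ : Fin (2 ^ d)) = γ.symm T :=
        Fin.val_injective hmod
      rw [this, γ.apply_symm_apply] at h
      exact h.2
    · intro hjT
      refine ⟨(hrepspec T).1, ?_⟩
      have hmod : rank (rep T) U % 2 ^ d = ((γ.symm T : Fin (2 ^ d)) : ℕ) := by
        rw [(hrepspec T).2]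
        exact Nat.mod_eq_of_lt (γ.symm T).2
      have heqfin : (⟨rank (rep T) U % 2 ^ d, Nat.mod_lt _ hqpos⟩ : Fin (2 ^ d)) = γ.symm T :=
        Fin.val_injective hmod
      rw [heqfin, γ.apply_symm_apply]
      exact hjT
  -- build the embedding
  have hinjE : Function.Injective (Sum.elim aj (fun T => Wf (rep T))) := by
    rintro (j | T) (j' | T') heq <;> simp only [Sum.elim_inl, Sum.elim_inr] at heq
    · rw [hajinj heq]
    · exact absurd (show Wf (rep T') ∈ A1 by rw [← heq]; exact hA'sub (hajA' j))
        (hWnotA1 (rep T'))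
    · exact absurd (show Wf (rep T) ∈ A1 by rw [heq]; exact hA'sub (hajA' j'))
        (hWnotA1 (rep T))
    · rw [hrepinj (hWinj heq)]
  refine ⟨b1, b2, ⟨⟨⟨Sum.elim aj (fun T => Wf (rep T)), hinjE⟩, ?_⟩⟩⟩
  · rintro (j | T) (j' | T') <;> simp only [Function.Embedding.coeFn_mk, Sum.elim_inl, Sum.elim_inr]
    · rw [myG_adj_ll]
      by_cases hjj : j = j'
      · subst hjj
        simp [G.irrefl]
      · constructor
        · intro hadj
          exact ⟨hjj, (hA1mono (aj j) (hA'sub (hajA' j)) (aj j') (hA'sub (hajA' j'))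
            (hajinj.ne_iff.mpr hjj)).mp hadj⟩
        · rintro ⟨-, hb⟩
          exact (hA1mono (aj j) (hA'sub (hajA' j)) (aj j') (hA'sub (hajA' j'))
            (hajinj.ne_iff.mpr hjj)).mpr hb
    · rw [myG_adj_lr, G.adj_comm, ← htrace (rep T') (aj j) (hajA' j), hkey]
    · rw [myG_adj_rl, ← htrace (rep T) (aj j') (hajA' j'), hkey]
    · rw [myG_adj_rr]
      by_cases hTT : T = T'
      · subst hTT
        simp [G.irrefl]
      · have hWne : Wf (rep T) ≠ Wf (rep T') :=
          (hWinj.ne_iff.mpr (hrepinj.ne_iff.mpr hTT))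
        constructor
        · intro hadj
          exact ⟨hTT, (hUWmono _ (hWmemUW _ (hrepspec T).1) _ (hWmemUW _ (hrepspec T').1)
            hWne).mp hadj⟩
        · rintro ⟨-, hb⟩
          exact (hUWmono _ (hWmemUW _ (hrepspec T).1) _ (hWmemUW _ (hrepspec T').1)
            hWne).mpr hb

/-- The classes of bipartite, co-bipartite and split graphs are the minimal hereditary
classes of unbounded VC-dimension: each has unbounded VC-dimension, and every hereditary
class of unbounded VC-dimension contains one of them as a subclass. -/
theorem minimal_classes_vc_dimension :
    ((∀ k : ℕ, ∃ (V : Type) (_ : Fintype V) (G : SimpleGraph V),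
        IsBip G ∧ VCDimAtLeast G k) ∧
     (∀ k : ℕ, ∃ (V : Type) (_ : Fintype V) (G : SimpleGraph V),
        IsBip Gᶜ ∧ VCDimAtLeast G k) ∧
     (∀ k : ℕ, ∃ (V : Type) (_ : Fintype V) (G : SimpleGraph V),
        IsSplit G ∧ VCDimAtLeast G k)) ∧
    (∀ C : ∀ V : Type, SimpleGraph V → Prop,
      (∀ (V W : Type) (G : SimpleGraph V) (H : SimpleGraph W),
        C V G → (H ↪g G) → C W H) →
      (∀ k : ℕ, ∃ (V : Type) (G : SimpleGraph V), C V G ∧ VCDimAtLeast G k) →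
      ((∀ (V : Type), Fintype V → ∀ G : SimpleGraph V, IsBip G → C V G) ∨
       (∀ (V : Type), Fintype V → ∀ G : SimpleGraph V, IsBip Gᶜ → C V G) ∨
       (∀ (V : Type), Fintype V → ∀ G : SimpleGraph V, IsSplit G → C V G))) := by
  classical
  constructor
  · refine ⟨fun k => ⟨_, inferInstance, myG k false false, myG_bip k, myG_vc k false false⟩,
      fun k => ⟨_, inferInstance, myG k true true, myG_cobip k, myG_vc k true true⟩,
      fun k => ⟨_, inferInstance, myG k false true, myG_split k, myG_vc k false true⟩⟩
  · intro C hHer hUnb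
    have hcore : ∀ n : ℕ, ∃ p : Bool × Bool, C _ (myG (n + 1) p.1 p.2) := by
      intro n
      obtain ⟨K, hK⟩ := core n
      obtain ⟨V, G, hCG, hVC⟩ := hUnb K
      obtain ⟨b1, b2, ⟨emb⟩⟩ := hK V G hVC
      exact ⟨(b1, b2), hHer V _ G _ hCG emb⟩
    choose p hp using hcore
    obtain ⟨y, hy⟩ := Finite.exists_infinite_fiber p
    have hyInf : (p ⁻¹' {y} : Set ℕ).Infinite := Set.infinite_coe_iff.mp hy
    have hall : ∀ m : ℕ, C _ (myG m y.1 y.2) := by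
      intro m
      obtain ⟨nn, hnnmem, hnn⟩ := hyInf.exists_notMem_finset (Finset.range m)
      have hmn : m ≤ nn + 1 := by
        have : ¬ nn < m := fun h => hnn (Finset.mem_range.mpr h)
        omega
      have hCnn : C _ (myG (nn + 1) y.1 y.2) := by
        have := hp nn
        rwa [show p nn = y from hnnmem] at this
      exact hHer _ _ _ _ hCnn (embMono hmn y.1 y.2)
    obtain ⟨b1, b2⟩ := y
    cases b1 <;> cases b2
    · -- bipartite case
      left
      intro V instF G hbip
      letI := instF
      obtain ⟨f, hf⟩ := hbip
      obtain ⟨emb⟩ := embPartition G f false false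
        (fun u v hu hv hne => iff_of_false (fun hadj => hf u v hadj (hu.trans hv.symm))
          (by simp))
        (fun u v hu hv hne => iff_of_false (fun hadj => hf u v hadj (hu.trans hv.symm))
          (by simp))
      exact hHer _ _ _ _ (hall (Fintype.card V)) emb
    · -- split case (independent side left, clique side right)
      right; right
      intro V instF G hsplit
      letI := instF
      obtain ⟨Kset, hcl, hind⟩ := hsplit
      set f : V → Bool := fun v => if v ∈ Kset then true else false with hfdef
      have hft : ∀ v, f v = true → v ∈ Kset := by
        intro v hv
        by_contra hc
        rw [hfdef] at hv
        simp only [hc, if_false] at hv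
        exact absurd hv (by simp)
      have hff : ∀ v, f v = false → v ∉ Kset := by
        intro v hv hc
        rw [hfdef] at hv
        simp only [hc, if_true] at hv
        exact absurd hv (by simp)
      obtain ⟨emb⟩ := embPartition G f false true
        (fun u v hu hv hne => iff_of_false
          (hind (Set.mem_compl (hff u hu)) (Set.mem_compl (hff v hv)) hne) (by simp))
        (fun u v hu hv hne => iff_of_true (hcl (hft u hu) (hft v hv) hne) rfl)
      exact hHer _ _ _ _ (hall (Fintype.card V)) emb
    · -- split case (clique side left, independent side right)
      right; right
      intro V instF G hsplit
      letI := instF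
      obtain ⟨Kset, hcl, hind⟩ := hsplit
      set f : V → Bool := fun v => if v ∈ Kset then false else true with hfdef
      have hft : ∀ v, f v = true → v ∉ Kset := by
        intro v hv hc
        rw [hfdef] at hv
        simp only [hc, if_true] at hv
        exact absurd hv (by simp)
      have hff : ∀ v, f v = false → v ∈ Kset := by
        intro v hv
        by_contra hc
        rw [hfdef] at hv
        simp only [hc, if_false] at hv
        exact absurd hv (by simp)
      obtain ⟨emb⟩ := embPartition G f true false
        (fun u v hu hv hne => iff_of_true (hcl (hff u hu) (hff v hv) hne) rfl)
        (fun u v hu hv hne => iff_of_false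
          (hind (Set.mem_compl (hft u hu)) (Set.mem_compl (hft v hv)) hne) (by simp))
      exact hHer _ _ _ _ (hall (Fintype.card V)) emb
    · -- co-bipartite case
      right; left
      intro V instF G hbip
      letI := instF
      obtain ⟨f, hf⟩ := hbip
      have hadj : ∀ u v : V, f u = f v → u ≠ v → G.Adj u v := by
        intro u v hfe hne
        by_contra hna
        exact hf u v ((SimpleGraph.compl_adj G u v).mpr ⟨hne, hna⟩) hfe
      obtain ⟨emb⟩ := embPartition G f true true
        (fun u v hu hv hne => iff_of_true (hadj u v (hu.trans hv.symm) hne) rfl)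
        (fun u v hu hv hne => iff_of_true (hadj u v (hu.trans hv.symm) hne) rfl)
      exact hHer _ _ _ _ (hall (Fintype.card V)) emb
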